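/- Let P be a bipartite graph with parts B and C in which every vertex of B has degree k ≥ 1, and let x = b + c be an eigenvector of the normalized Laplacian of P with eigenvalue λ. Form the graph G from P by adding a set A' of new vertices joined completely to B (and all vertices of B now have degree s = k + |A'|), keeping P between B and C and no other edges. If b is orthogonal to 1_B (in the unweighted inner product), then the vector ŷ with ŷ = b on B, ŷ = √(s/k)·c' on C (where c' is the harmonic version of c), and 0 on A', extended appropriately, witnesses that γ = 1 − (1−λ)√(k/s) is an eigenvalue of the normalized Laplacian of G. -/

import Mathlib

open scoped Classical
noncomputable def adjM {V : Type*} [Fintype V] (G : SimpleGraph V) : Matrix V V ℝ :=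
  fun u v => if G.Adj u v then 1 else 0
noncomputable def degM {V : Type*} [Fintype V] (G : SimpleGraph V) : Matrix V V ℝ :=
  Matrix.diagonal fun v => (G.degree v : ℝ)
noncomputable def normLap {V : Type*} [Fintype V] (G : SimpleGraph V) : Matrix V V ℝ :=
  Matrix.diagonal (fun v => (Real.sqrt (G.degree v))⁻¹) * (degM G - adjM G) *
    Matrix.diagonal (fun v => (Real.sqrt (G.degree v))⁻¹)



lemma normLap_mulVec_apply {V : Type*} [Fintype V] (H : SimpleGraph V) (x : V → ℝ) (v : V) :
    (normLap H).mulVec x v = (Real.sqrt (H.degree v))⁻¹ *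
      ((H.degree v : ℝ) * ((Real.sqrt (H.degree v))⁻¹ * x v)
        - ∑ u ∈ H.neighborFinset v, (Real.sqrt (H.degree u))⁻¹ * x u) := by
  classical
  set f : V → ℝ := fun u => (Real.sqrt (H.degree u))⁻¹ with hf
  have h1 : (normLap H).mulVec x =
      (Matrix.diagonal f).mulVec ((degM H - adjM H).mulVec ((Matrix.diagonal f).mulVec x)) := by
    rw [Matrix.mulVec_mulVec, Matrix.mulVec_mulVec]; rfl
  rw [h1, Matrix.mulVec_diagonal]
  congr 1
  rw [Matrix.sub_mulVec]
  simp only [Pi.sub_apply]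
  congr 1
  · rw [degM, Matrix.mulVec_diagonal, Matrix.mulVec_diagonal]
  · simp only [adjM, Matrix.mulVec, dotProduct]
    rw [show H.neighborFinset v = Finset.univ.filter (H.Adj v) by ext u; simp]
    rw [Finset.sum_filter]
    apply Finset.sum_congr rfl
    intro u _
    simp only [Matrix.diagonal_apply, ite_mul, zero_mul, Finset.sum_ite_eq, Finset.mem_univ,
      if_true]
    split <;> simp [hf]

lemma algS (b S xv lam kk : ℝ) (hb : b ≠ 0) (hbb : b*b = kk)
    (h : b⁻¹ * (kk * (b⁻¹ * xv) - S) = lam * xv) : S = (1-lam)*b*xv := by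
  subst hbb
  field_simp at h
  have h2 : b * S = b * ((1-lam)*b*xv) := by linear_combination (-b) * h
  exact mul_left_cancel₀ hb h2
lemma algB (a b xv lam s : ℝ) (ha : a ≠ 0) (haa : a*a = s) :
    a⁻¹ * (s * (a⁻¹ * xv) - (1-lam)*b*xv) = (1 - (1-lam)*(b/a))*xv := by
  subst haa
  field_simp
lemma algC (a b c xv lam d : ℝ) (ha : a ≠ 0) (hc : c ≠ 0) (haa : a*a = d) :
    a⁻¹ * (d * (a⁻¹ * xv) - b/c * ((1-lam)*a*xv)) = (1 - (1-lam)*(b/c))*xv := by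
  subst haa
  field_simp

/-- Attaching a set `A'` completely joined to the part `B` of a bipartite graph `P`
(with `B`-degrees `k ≥ 1`): each normalized-Laplacian eigenvalue `λ` of `P` whose
eigenvector has `B`-part orthogonal to `1_B` gives rise to the eigenvalue
`γ = 1 - (1-λ)√(k/s)` of the new graph `G`, where `s = k + |A'|`. -/
theorem stmt14 {V : Type*} [Fintype V] (SA' SB SC : Set V)
    (hd1 : Disjoint SA' SB) (hd2 : Disjoint SA' SC) (hd3 : Disjoint SB SC)
    (hcover : SA' ∪ SB ∪ SC = Set.univ)
    (k : ℕ) (hk : 1 ≤ k)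
    (P : SimpleGraph V)
    (hPbip : ∀ u v, P.Adj u v → (u ∈ SB ∧ v ∈ SC) ∨ (u ∈ SC ∧ v ∈ SB))
    (hPdegB : ∀ v ∈ SB, P.degree v = k)
    (hPdegC : ∀ v ∈ SC, 0 < P.degree v)
    (lam : ℝ) (x : V → ℝ) (hx : x ≠ 0)
    (hsupp : ∀ v, v ∉ SB ∪ SC → x v = 0)
    (hev : (normLap P).mulVec x = lam • x)
    (horth : ∑ v ∈ Finset.univ.filter (· ∈ SB), x v = 0)
    (G : SimpleGraph V)
    (hG : ∀ u v, G.Adj u v ↔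
      P.Adj u v ∨ (u ∈ SA' ∧ v ∈ SB) ∨ (u ∈ SB ∧ v ∈ SA'))
    (s : ℝ) (hs : s = k + SA'.ncard) :
    ∃ y : V → ℝ, y ≠ 0 ∧
      (normLap G).mulVec y = (1 - (1 - lam) * Real.sqrt (k / s)) • y := by
  classical
  -- basic positivity
  have hk0 : (0:ℝ) < k := by exact_mod_cast hk
  have hs0 : (0:ℝ) < s := by
    rw [hs]; positivity
  have hsqs : Real.sqrt s ≠ 0 := ne_of_gt (Real.sqrt_pos.mpr hs0)
  have hsqk : Real.sqrt k ≠ 0 := ne_of_gt (Real.sqrt_pos.mpr hk0)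
  have hks : Real.sqrt ((k:ℝ) / s) = Real.sqrt k / Real.sqrt s :=
    Real.sqrt_div (by positivity) s
  -- membership facts
  have hAB : ∀ v ∈ SA', v ∉ SB := fun v hv => Set.disjoint_left.mp hd1 hv
  have hAC : ∀ v ∈ SA', v ∉ SC := fun v hv => Set.disjoint_left.mp hd2 hv
  have hBA : ∀ v ∈ SB, v ∉ SA' := fun v hv => Set.disjoint_right.mp hd1 hv
  have hBC : ∀ v ∈ SB, v ∉ SC := fun v hv => Set.disjoint_left.mp hd3 hv
  have hCA : ∀ v ∈ SC, v ∉ SA' := fun v hv => Set.disjoint_right.mp hd2 hv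
  have hCB : ∀ v ∈ SC, v ∉ SB := fun v hv => Set.disjoint_right.mp hd3 hv
  have hxA : ∀ v ∈ SA', x v = 0 := fun v hv =>
    hsupp v (by simp only [Set.mem_union]; push_neg; exact ⟨hAB v hv, hAC v hv⟩)
  -- P-adjacency facts
  have hPBC : ∀ v ∈ SB, ∀ u, P.Adj v u → u ∈ SC := by
    intro v hv u h
    rcases hPbip v u h with ⟨_, h2⟩ | ⟨h1, _⟩
    · exact h2
    · exact absurd h1 (hBC v hv)
  have hPCB : ∀ v ∈ SC, ∀ u, P.Adj v u → u ∈ SB := by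
    intro v hv u h
    rcases hPbip v u h with ⟨h1, _⟩ | ⟨_, h2⟩
    · exact absurd h1 (hCB v hv)
    · exact h2
  have hPA : ∀ v ∈ SA', ∀ u, ¬ P.Adj v u := by
    intro v hv u h
    rcases hPbip v u h with ⟨h1, _⟩ | ⟨h1, _⟩
    · exact hAB v hv h1
    · exact hAC v hv h1
  -- neighbor finsets in G
  have hGB : ∀ v ∈ SB, G.neighborFinset v
      = P.neighborFinset v ∪ Finset.univ.filter (· ∈ SA') := by
    intro v hv
    ext u
    simp only [SimpleGraph.mem_neighborFinset, Finset.mem_union, Finset.mem_filter,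
      Finset.mem_univ, true_and, hG]
    constructor
    · rintro (h | ⟨h1, _⟩ | ⟨_, h2⟩)
      · exact Or.inl h
      · exact absurd h1 (hBA v hv)
      · exact Or.inr h2
    · rintro (h | h)
      · exact Or.inl h
      · exact Or.inr (Or.inr ⟨hv, h⟩)
  have hGC : ∀ v ∈ SC, G.neighborFinset v = P.neighborFinset v := by
    intro v hv
    ext u
    simp only [SimpleGraph.mem_neighborFinset, hG]
    constructor
    · rintro (h | ⟨h1, _⟩ | ⟨h1, _⟩)
      · exact h
      · exact absurd h1 (hCA v hv)
      · exact absurd h1 (hCB v hv)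
    · exact fun h => Or.inl h
  have hGA : ∀ v ∈ SA', G.neighborFinset v = Finset.univ.filter (· ∈ SB) := by
    intro v hv
    ext u
    simp only [SimpleGraph.mem_neighborFinset, Finset.mem_filter, Finset.mem_univ, true_and, hG]
    constructor
    · rintro (h | ⟨_, h2⟩ | ⟨h1, _⟩)
      · exact absurd h (hPA v hv u)
      · exact h2
      · exact absurd h1 (hAB v hv)
    · exact fun h => Or.inr (Or.inl ⟨hv, h⟩)
  -- degrees in G
  have hdisjBnb : ∀ v ∈ SB, Disjoint (P.neighborFinset v) (Finset.univ.filter (· ∈ SA')) := by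
    intro v hv
    rw [Finset.disjoint_left]
    intro u hu hu'
    rw [SimpleGraph.mem_neighborFinset] at hu
    rw [Finset.mem_filter] at hu'
    exact hCA u (hPBC v hv u hu) hu'.2
  have hcardA : (Finset.univ.filter (· ∈ SA')).card = SA'.ncard := by
    rw [Set.ncard_eq_toFinset_card', ← Set.filter_mem_univ_eq_toFinset]
  have hdegGB : ∀ v ∈ SB, (G.degree v : ℝ) = s := by
    intro v hv
    rw [← SimpleGraph.card_neighborFinset_eq_degree, hGB v hv,
      Finset.card_union_of_disjoint (hdisjBnb v hv),
      SimpleGraph.card_neighborFinset_eq_degree, hPdegB v hv, hcardA, hs]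
    push_cast; ring
  have hdegGC : ∀ v ∈ SC, G.degree v = P.degree v := by
    intro v hv
    rw [← SimpleGraph.card_neighborFinset_eq_degree, hGC v hv,
      SimpleGraph.card_neighborFinset_eq_degree]
  -- eigen-equation for P, pointwise
  have hevp : ∀ v, (Real.sqrt (P.degree v))⁻¹ *
      ((P.degree v : ℝ) * ((Real.sqrt (P.degree v))⁻¹ * x v)
        - ∑ u ∈ P.neighborFinset v, (Real.sqrt (P.degree u))⁻¹ * x u) = lam * x v := by
    intro v
    rw [← normLap_mulVec_apply, hev]
    simp
  refine ⟨x, hx, ?_⟩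
  funext v
  rw [normLap_mulVec_apply]
  simp only [Pi.smul_apply, smul_eq_mul]
  have hvmem : v ∈ SA' ∪ SB ∪ SC := by rw [hcover]; trivial
  rcases hvmem with (hv | hv) | hv
  · -- v ∈ SA'
    have hxv : x v = 0 := hxA v hv
    have hsum : ∑ u ∈ G.neighborFinset v, (Real.sqrt (G.degree u))⁻¹ * x u = 0 := by
      rw [hGA v hv]
      have : ∀ u ∈ Finset.univ.filter (· ∈ SB),
          (Real.sqrt (G.degree u))⁻¹ * x u = (Real.sqrt s)⁻¹ * x u := by
        intro u hu
        rw [Finset.mem_filter] at hu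
        rw [hdegGB u hu.2]
      rw [Finset.sum_congr rfl this, ← Finset.mul_sum, horth, mul_zero]
    rw [hsum, hxv]
    ring
  · -- v ∈ SB
    have hdB : (P.degree v : ℝ) = k := by rw [hPdegB v hv]
    have hS : ∑ u ∈ P.neighborFinset v, (Real.sqrt (P.degree u))⁻¹ * x u
        = (1 - lam) * Real.sqrt k * x v := by
      have h := hevp v
      rw [hdB] at h
      exact algS _ _ _ _ _ hsqk (Real.mul_self_sqrt (le_of_lt hk0)) h
    have hsum : ∑ u ∈ G.neighborFinset v, (Real.sqrt (G.degree u))⁻¹ * x u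
        = (1 - lam) * Real.sqrt k * x v := by
      rw [hGB v hv, Finset.sum_union (hdisjBnb v hv)]
      have h1 : ∑ u ∈ P.neighborFinset v, (Real.sqrt (G.degree u))⁻¹ * x u
          = ∑ u ∈ P.neighborFinset v, (Real.sqrt (P.degree u))⁻¹ * x u := by
        apply Finset.sum_congr rfl
        intro u hu
        rw [SimpleGraph.mem_neighborFinset] at hu
        rw [hdegGC u (hPBC v hv u hu)]
      have h2 : ∑ u ∈ Finset.univ.filter (· ∈ SA'), (Real.sqrt (G.degree u))⁻¹ * x u = 0 := by
        apply Finset.sum_eq_zero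
        intro u hu
        rw [Finset.mem_filter] at hu
        rw [hxA u hu.2, mul_zero]
      rw [h1, h2, hS, add_zero]
    rw [hsum, hdegGB v hv, hks]
    have hss : Real.sqrt s * Real.sqrt s = s := Real.mul_self_sqrt (le_of_lt hs0)
    linear_combination algB (Real.sqrt s) (Real.sqrt k) (x v) lam s hsqs hss
  · -- v ∈ SC
    have hd0 : (0:ℝ) < (P.degree v : ℝ) := by exact_mod_cast hPdegC v hv
    have hsqd : Real.sqrt (P.degree v) ≠ 0 := ne_of_gt (Real.sqrt_pos.mpr hd0)
    have hT : ∑ u ∈ P.neighborFinset v, (Real.sqrt (P.degree u))⁻¹ * x u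
        = (1 - lam) * Real.sqrt (P.degree v) * x v := by
      have h := hevp v
      have hdd : Real.sqrt (P.degree v) * Real.sqrt (P.degree v) = (P.degree v : ℝ) :=
        Real.mul_self_sqrt (le_of_lt hd0)
      exact algS _ _ _ _ _ hsqd hdd h
    have hsum : ∑ u ∈ G.neighborFinset v, (Real.sqrt (G.degree u))⁻¹ * x u
        = (Real.sqrt k / Real.sqrt s) * ((1 - lam) * Real.sqrt (P.degree v) * x v) := by
      rw [hGC v hv]
      have h1 : ∀ u ∈ P.neighborFinset v,
          (Real.sqrt (G.degree u))⁻¹ * x u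
            = (Real.sqrt k / Real.sqrt s) * ((Real.sqrt (P.degree u))⁻¹ * x u) := by
        intro u hu
        rw [SimpleGraph.mem_neighborFinset] at hu
        have huB : u ∈ SB := hPCB v hv u hu
        rw [hdegGB u huB]
        have : (P.degree u : ℝ) = k := by rw [hPdegB u huB]
        rw [this]
        field_simp
      rw [Finset.sum_congr rfl h1, ← Finset.mul_sum, hT]
    rw [hsum, hdegGC v hv, hks]
    have hdd : Real.sqrt (P.degree v) * Real.sqrt (P.degree v) = (P.degree v : ℝ) :=
      Real.mul_self_sqrt (le_of_lt hd0)
    linear_combination algC (Real.sqrt (P.degree v)) (Real.sqrt k) (Real.sqrt s) (x v) lam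
      ((P.degree v : ℕ) : ℝ) hsqd hsqs hdd
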